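/- Fix integers d, N ≥ 1 and reals β, C_LS, 𝖢 > 0. Let g : ℝ^d × ℝ^d → ℝ be symmetric and measurable. Let (μ^t)_{t≥0} be probability densities on ℝ^d and (f_N^t)_{t≥0} probability densities on (ℝ^d)^N, positive and C¹ in the space variable and continuous in t, such that for every t ≥ 0: K_{N,β}(μ^t) ∈ (0,∞), the modulated Gibbs measure Q_{N,β}(μ^t) has a positive C¹ density q_N^t with respect to Lebesgue measure, all quantities appearing below are finite and continuous in t, and t ↦ E_N(f_N^t, μ^t) is differentiable. Let a : [0,∞) → [0,∞) be continuous, let b : [0,∞) → [0,∞) be C¹ with E_N(f_N^t, μ^t) + b(t) ≥ 0 for all t, and set k(t) := log K_{N,β}(μ^t)/(βN), assumed continuous in t. Assume: (i) for every t ≥ 0, (d/dt) E_N(f_N^t, μ^t) ≤ −(1/(β²N)) ∫ |∇ log(f_N^t/q_N^t)|² df_N^t + (𝖢 a(t)/2)(E_N(f_N^t, μ^t) + b(t)); and (ii) for every t ≥ 0, the logarithmic Sobolev inequality ∫ φ² log(φ²/∫ φ² dQ_{N,β}(μ^t)) dQ_{N,β}(μ^t) ≤ C_LS ∫ |∇φ|²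 dQ_{N,β}(μ^t) holds for the function φ = √(f_N^t/q_N^t). Then, writing 𝓔_N^t := E_N(f_N^t, μ^t) + b(t), for every t ≥ 0 one has 𝓔_N^t ≤ e^{−4t/(βC_LS) + ∫_0^t (𝖢 a(τ)/2) dτ} 𝓔_N^0 + e^{−4t/(βC_LS) + ∫_0^t (𝖢 a(τ)/2) dτ} ∫_0^t e^{4τ/(βC_LS) − ∫_0^τ (𝖢 a(τ')/2) dτ'} [ b'(τ) + (4/(βC_LS))( b(τ) − k(τ) ) ] dτ. -/

import Mathlib

open MeasureTheory

noncomputable section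

/-- The modulated energy
`F_N(X_N, μ) = (1/(2N²)) Σ_{i≠j} g(x_i,x_j) − (1/N) Σ_i ∫ g(x_i,y) dμ(y)
  + (1/2) ∬ g dμ dμ`. -/
def modEnergy (d N : ℕ) (g : EuclideanSpace ℝ (Fin d) → EuclideanSpace ℝ (Fin d) → ℝ)
    (μ : Measure (EuclideanSpace ℝ (Fin d))) (X : Fin N → EuclideanSpace ℝ (Fin d)) : ℝ :=
  (1 / (2 * (N : ℝ) ^ 2)) * ∑ i : Fin N, ∑ j ∈ Finset.univ.erase i, g (X i) (X j)
    - (1 / (N : ℝ)) * ∑ i : Fin N, ∫ y, g (X i) y ∂μ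
    + (1 / 2) * ∫ x, ∫ y, g x y ∂μ ∂μ

/-- The partition function `K_{N,β}(μ) = ∫ exp(−βN F_N(X_N,μ)) dμ^{⊗N}(X_N)`. -/
def Kpart (d N : ℕ) (β : ℝ) (g : EuclideanSpace ℝ (Fin d) → EuclideanSpace ℝ (Fin d) → ℝ)
    (μ : Measure (EuclideanSpace ℝ (Fin d))) : ℝ :=
  ∫ X : Fin N → EuclideanSpace ℝ (Fin d),
    Real.exp (-(β * N * modEnergy d N g μ X)) ∂(Measure.pi fun _ => μ)

/-- The modulated Gibbs measure `Q_{N,β}(μ)`, with density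
`exp(−βN F_N(X_N,μ))/K_{N,β}(μ)` with respect to `μ^{⊗N}`. -/
def modGibbs (d N : ℕ) (β : ℝ) (g : EuclideanSpace ℝ (Fin d) → EuclideanSpace ℝ (Fin d) → ℝ)
    (μ : Measure (EuclideanSpace ℝ (Fin d))) : Measure (Fin N → EuclideanSpace ℝ (Fin d)) :=
  (Measure.pi fun _ => μ).withDensity fun X =>
    ENNReal.ofReal (Real.exp (-(β * N * modEnergy d N g μ X)) / Kpart d N β g μ)

/-- The normalized relative entropy `H_N(f | g) = (1/N) ∫ log(df/dg) df`. -/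
def relEnt {α : Type*} [MeasurableSpace α] (N : ℕ) (f g : Measure α) : ℝ :=
  (1 / (N : ℝ)) * ∫ x, Real.log ((f.rnDeriv g x).toReal) ∂f

/-- The modulated free energy
`E_N(f_N, μ) = (1/β) H_N(f_N | μ^{⊗N}) + ∫ F_N(X_N,μ) df_N(X_N)`. -/
def modFreeEnergy (d N : ℕ) (β : ℝ)
    (g : EuclideanSpace ℝ (Fin d) → EuclideanSpace ℝ (Fin d) → ℝ)
    (f : Measure (Fin N → EuclideanSpace ℝ (Fin d)))
    (μ : Measure (EuclideanSpace ℝ (Fin d))) : ℝ :=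
  (1 / β) * relEnt N f (Measure.pi fun _ => μ) + ∫ X, modEnergy d N g μ X ∂f

/-- The measure on `ℝ^d` with density `μ` with respect to Lebesgue measure. -/
def densMeasure (d : ℕ) (μ : EuclideanSpace ℝ (Fin d) → ℝ) :
    Measure (EuclideanSpace ℝ (Fin d)) :=
  volume.withDensity fun x => ENNReal.ofReal (μ x)

/-- The measure on `(ℝ^d)^N` with density `f` with respect to Lebesgue measure. -/
def densMeasureN (d N : ℕ) (f : (Fin N → EuclideanSpace ℝ (Fin d)) → ℝ) :
    Measure (Fin N → EuclideanSpace ℝ (Fin d)) :=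
  volume.withDensity fun X => ENNReal.ofReal (f X)


open Set in
lemma gronwall_aux (L : ℝ) (A c y y' : ℝ → ℝ)
    (hA : ContinuousOn A (Set.Ici 0)) (hc : ContinuousOn c (Set.Ici 0))
    (hy : ∀ t, 0 ≤ t → HasDerivAt y (y' t) t)
    (hineq : ∀ t, 0 ≤ t → y' t ≤ (-L + A t) * y t + c t) :
    ∀ t, 0 ≤ t → y t ≤ Real.exp (-(L * t) + ∫ τ in (0:ℝ)..t, A τ) *
      (y 0 + ∫ τ in (0:ℝ)..t, Real.exp (L * τ - ∫ τ' in (0:ℝ)..τ, A τ') * c τ) := by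
  intro T hT
  set lam : ℝ → ℝ := fun τ => -L + A τ with hlam_def
  have hlam : ContinuousOn lam (Set.Ici 0) := continuousOn_const.add hA
  set Lam : ℝ → ℝ := fun t => ∫ τ in (0:ℝ)..t, lam τ with hLam_def
  have hsub : ∀ s : ℝ, 0 ≤ s → Set.uIcc (0:ℝ) s ⊆ Set.Ici 0 := by
    intro s hs
    rw [Set.uIcc_of_le hs]
    exact fun x hx => hx.1
  have hLam_eq : ∀ s : ℝ, 0 ≤ s → Lam s = -(L * s) + ∫ τ in (0:ℝ)..s, A τ := by
    intro s hs
    rw [hLam_def]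
    simp only [hlam_def]
    rw [intervalIntegral.integral_add intervalIntegrable_const
      ((hA.mono (hsub s hs)).intervalIntegrable), intervalIntegral.integral_const, smul_eq_mul]
    ring
  have hlam_int : ∀ s : ℝ, 0 ≤ s → IntervalIntegrable lam volume 0 s := fun s hs =>
    (hlam.mono (hsub s hs)).intervalIntegrable
  have hLam_deriv : ∀ s : ℝ, 0 < s → HasDerivAt Lam (lam s) s := by
    intro s hs
    exact intervalIntegral.integral_hasDerivAt_right (hlam_int s hs.le)
      (ContinuousOn.stronglyMeasurableAtFilter isOpen_Ioi (hlam.mono Set.Ioi_subset_Ici_self) s hs)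
      ((hlam.mono Set.Ioi_subset_Ici_self).continuousAt (isOpen_Ioi.mem_nhds hs))
  have hLam_cont : ContinuousOn Lam (Set.Icc 0 T) := by
    have := intervalIntegral.continuousOn_primitive_interval
      (f := lam) (μ := volume) (a := (0:ℝ)) (b := T)
      ((hlam.mono (hsub T hT)).integrableOn_compact isCompact_uIcc)
    rwa [Set.uIcc_of_le hT] at this
  set h : ℝ → ℝ := fun τ => Real.exp (-Lam τ) * c τ with hh_def
  have hh_cont : ContinuousOn h (Set.Icc 0 T) :=
    (Real.continuous_exp.comp_continuousOn hLam_cont.neg).mul (hc.mono Set.Icc_subset_Ici_self)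
  have hh_contO : ContinuousOn h (Set.Ioi 0) := by
    intro s hs
    exact ((Real.continuous_exp.continuousAt.comp
      (hLam_deriv s hs).continuousAt.neg).mul
      ((hc.mono Set.Ioi_subset_Ici_self).continuousAt
        (isOpen_Ioi.mem_nhds hs))).continuousWithinAt
  set P : ℝ → ℝ := fun t => ∫ τ in (0:ℝ)..t, h τ with hP_def
  have hP_cont : ContinuousOn P (Set.Icc 0 T) := by
    have := intervalIntegral.continuousOn_primitive_interval
      (f := h) (μ := volume) (a := (0:ℝ)) (b := T)
      ((hh_cont.mono (by rw [Set.uIcc_of_le hT])).integrableOn_compact isCompact_uIcc)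
    rwa [Set.uIcc_of_le hT] at this
  have hP_deriv : ∀ s ∈ Set.Ioo (0:ℝ) T, HasDerivAt P (h s) s := by
    intro s hs
    refine intervalIntegral.integral_hasDerivAt_right
      ((hh_cont.mono ?_).intervalIntegrable)
      (ContinuousOn.stronglyMeasurableAtFilter isOpen_Ioi hh_contO s hs.1)
      ((hh_contO).continuousAt (isOpen_Ioi.mem_nhds hs.1))
    rw [Set.uIcc_of_le hs.1.le]
    exact Set.Icc_subset_Icc le_rfl hs.2.le
  set G : ℝ → ℝ := fun t => Real.exp (-Lam t) * y t - P t with hG_def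
  have hy_cont : ContinuousOn y (Set.Icc 0 T) := fun s hs =>
    ((hy s hs.1).continuousAt).continuousWithinAt
  have hG_cont : ContinuousOn G (Set.Icc 0 T) :=
    ((Real.continuous_exp.comp_continuousOn hLam_cont.neg).mul hy_cont).sub hP_cont
  have hanti : AntitoneOn G (Set.Icc 0 T) := by
    apply antitoneOn_of_deriv_nonpos (convex_Icc 0 T) hG_cont
    · intro s hs
      rw [interior_Icc] at hs
      exact ((((hLam_deriv s hs.1).neg.exp.mul (hy s hs.1.le)).sub
        (hP_deriv s hs))).differentiableAt.differentiableWithinAt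
    · intro s hs
      rw [interior_Icc] at hs
      have hG' := (((hLam_deriv s hs.1).neg.exp.mul (hy s hs.1.le)).sub (hP_deriv s hs))
      rw [show deriv G s = _ from hG'.deriv]
      have h1 := hineq s hs.1.le
      have h2 := (Real.exp_pos (-Lam s)).le
      simp only [hh_def, hlam_def, Pi.neg_apply]
      nlinarith [mul_le_mul_of_nonneg_left h1 h2]
  have hmono : G T ≤ G 0 := hanti (Set.left_mem_Icc.mpr hT) (Set.right_mem_Icc.mpr hT) hT
  have hG0 : G 0 = y 0 := by
    simp [hG_def, hP_def, hLam_def, intervalIntegral.integral_same]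
  have hfin : Real.exp (-Lam T) * y T ≤ y 0 + P T := by
    rw [hG0] at hmono
    simp only [hG_def] at hmono
    linarith
  have hmul := mul_le_mul_of_nonneg_left hfin (Real.exp_pos (Lam T)).le
  rw [← mul_assoc, ← Real.exp_add, add_neg_cancel, Real.exp_zero, one_mul] at hmul
  calc y T ≤ Real.exp (Lam T) * (y 0 + P T) := hmul
    _ = Real.exp (-(L * T) + ∫ τ in (0:ℝ)..T, A τ) *
        (y 0 + ∫ τ in (0:ℝ)..T, Real.exp (L * τ - ∫ τ' in (0:ℝ)..τ, A τ') * c τ) := by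
      congr 1
      · rw [hLam_eq T hT]
      · congr 1
        apply intervalIntegral.integral_congr
        intro τ hτ
        rw [Set.uIcc_of_le hT] at hτ
        simp only [hh_def]
        rw [hLam_eq τ hτ.1]
        congr 1
        ring_nf

open scoped NNReal ENNReal in
lemma integral_densMeasureN {d N : ℕ} {f : (Fin N → EuclideanSpace ℝ (Fin d)) → ℝ}
    (hf : Measurable f) (hf0 : ∀ X, 0 ≤ f X) (g : (Fin N → EuclideanSpace ℝ (Fin d)) → ℝ) :
    ∫ X, g X ∂(densMeasureN d N f) = ∫ X, f X * g X := by
  rw [densMeasureN]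
  have h1 : (fun X => ENNReal.ofReal (f X))
      = fun X => (((f X).toNNReal : ℝ≥0) : ℝ≥0∞) := rfl
  rw [h1, integral_withDensity_eq_integral_smul (f := fun X => (f X).toNNReal)
    hf.real_toNNReal]
  refine integral_congr_ae (Filter.Eventually.of_forall fun X => ?_)
  simp [NNReal.smul_def, Real.coe_toNNReal _ (hf0 X)]

lemma measurable_modEnergy {d N : ℕ}
    {g : EuclideanSpace ℝ (Fin d) → EuclideanSpace ℝ (Fin d) → ℝ}
    (hg : Measurable (Function.uncurry g))
    (μ : Measure (EuclideanSpace ℝ (Fin d))) [SFinite μ] :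
    Measurable (modEnergy d N g μ) := by
  unfold modEnergy
  refine Measurable.add (Measurable.sub ?_ ?_) measurable_const
  · exact (Finset.measurable_sum _ fun i _ => Finset.measurable_sum _ fun j _ =>
      hg.comp ((measurable_pi_apply i).prodMk (measurable_pi_apply j))).const_mul _
  · refine (Finset.measurable_sum _ fun i _ => ?_).const_mul _
    have h1 : StronglyMeasurable fun x => ∫ y, g x y ∂μ :=
      StronglyMeasurable.integral_prod_right' (hg.stronglyMeasurable)
    exact h1.measurable.comp (measurable_pi_apply i)

/-- **Exponential decay of the modulated free energy under a uniform modulated logarithmic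
Sobolev inequality** (main theorem). Given the modulated-free-energy dissipation
inequality (i) and the uniform LSI (ii) for the modulated Gibbs measures `Q_{N,β}(μ^t)`
applied to `φ = √(f_N^t/q_N^t)`, the corrected modulated free energy
`𝓔_N^t = E_N(f_N^t, μ^t) + b(t)` satisfies the Grönwall estimate of Theorem 1.2. -/
theorem stmt_0 (d N : ℕ) (hd : 1 ≤ d) (hN : 1 ≤ N)
    (β CLS Cc : ℝ) (hβ : 0 < β) (hCLS : 0 < CLS) (hCc : 0 < Cc)
    (g : EuclideanSpace ℝ (Fin d) → EuclideanSpace ℝ (Fin d) → ℝ)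
    (hg_symm : ∀ x y, g x y = g y x)
    (hg_meas : Measurable (Function.uncurry g))
    -- time-dependent probability densities `μ^t` on `ℝ^d` and `f_N^t` on `(ℝ^d)^N`:
    (μ : ℝ → EuclideanSpace ℝ (Fin d) → ℝ)
    (f : ℝ → (Fin N → EuclideanSpace ℝ (Fin d)) → ℝ)
    (hμ_meas : ∀ t, 0 ≤ t → Measurable (μ t))
    (hμ_prob : ∀ t, 0 ≤ t → IsProbabilityMeasure (densMeasure d (μ t)))
    (hf_prob : ∀ t, 0 ≤ t → IsProbabilityMeasure (densMeasureN d N (f t)))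
    (hf_pos : ∀ t, 0 ≤ t → ∀ X, 0 < f t X)
    (hf_C1 : ∀ t, 0 ≤ t → ContDiff ℝ 1 (f t))
    (hf_cont_t : ∀ X, ContinuousOn (fun t => f t X) (Set.Ici 0))
    -- `K_{N,β}(μ^t) ∈ (0,∞)`:
    (hK_pos : ∀ t, 0 ≤ t → 0 < Kpart d N β g (densMeasure d (μ t)))
    (hK_int : ∀ t, 0 ≤ t →
      Integrable (fun X => Real.exp (-(β * N * modEnergy d N g (densMeasure d (μ t)) X)))
        (Measure.pi fun _ : Fin N => densMeasure d (μ t)))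
    -- `Q_{N,β}(μ^t)` has a positive `C¹` Lebesgue density `q_N^t`:
    (q : ℝ → (Fin N → EuclideanSpace ℝ (Fin d)) → ℝ)
    (hq_pos : ∀ t, 0 ≤ t → ∀ X, 0 < q t X)
    (hq_C1 : ∀ t, 0 ≤ t → ContDiff ℝ 1 (q t))
    (hQ_eq : ∀ t, 0 ≤ t →
      modGibbs d N β g (densMeasure d (μ t)) = densMeasureN d N (q t))
    -- finiteness of the quantities appearing below:
    (hH_fin : ∀ t, 0 ≤ t → Integrable
      (fun X => Real.log (((densMeasureN d N (f t)).rnDeriv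
        (Measure.pi fun _ : Fin N => densMeasure d (μ t)) X).toReal))
      (densMeasureN d N (f t)))
    (hF_fin : ∀ t, 0 ≤ t →
      Integrable (modEnergy d N g (densMeasure d (μ t))) (densMeasureN d N (f t)))
    (hFish_fin : ∀ t, 0 ≤ t →
      Integrable (fun X => ‖fderiv ℝ (fun Y => Real.log (f t Y / q t Y)) X‖ ^ 2)
        (densMeasureN d N (f t)))
    -- the auxiliary functions `a`, `b`, `k`:
    (a : ℝ → ℝ) (ha_cont : ContinuousOn a (Set.Ici 0)) (ha_nonneg : ∀ t, 0 ≤ t → 0 ≤ a t)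
    (b b' : ℝ → ℝ) (hb_nonneg : ∀ t, 0 ≤ t → 0 ≤ b t)
    (hb_deriv : ∀ t, 0 ≤ t → HasDerivAt b (b' t) t)
    (hb'_cont : ContinuousOn b' (Set.Ici 0))
    (hEb_nonneg : ∀ t, 0 ≤ t →
      0 ≤ modFreeEnergy d N β g (densMeasureN d N (f t)) (densMeasure d (μ t)) + b t)
    (hk_cont : ContinuousOn
      (fun t => Real.log (Kpart d N β g (densMeasure d (μ t))) / (β * N)) (Set.Ici 0))
    -- `t ↦ E_N(f_N^t, μ^t)` is differentiable, with derivative `E'`: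
    (E' : ℝ → ℝ)
    (hE_deriv : ∀ t, 0 ≤ t → HasDerivAt
      (fun τ => modFreeEnergy d N β g (densMeasureN d N (f τ)) (densMeasure d (μ τ)))
      (E' t) t)
    -- (i) the dissipation inequality for the modulated free energy:
    (h_i : ∀ t, 0 ≤ t →
      E' t ≤ -(1 / (β ^ 2 * N)) *
          (∫ X, ‖fderiv ℝ (fun Y => Real.log (f t Y / q t Y)) X‖ ^ 2
            ∂(densMeasureN d N (f t)))
        + (Cc * a t / 2) *
          (modFreeEnergy d N β g (densMeasureN d N (f t)) (densMeasure d (μ t)) + b t))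
    -- (ii) the logarithmic Sobolev inequality for `Q_{N,β}(μ^t)` at `φ = √(f_N^t/q_N^t)`:
    (h_ii : ∀ t, 0 ≤ t →
      ∫ X, Real.sqrt (f t X / q t X) ^ 2 *
          Real.log (Real.sqrt (f t X / q t X) ^ 2 /
            ∫ Y, Real.sqrt (f t Y / q t Y) ^ 2 ∂(modGibbs d N β g (densMeasure d (μ t))))
          ∂(modGibbs d N β g (densMeasure d (μ t)))
        ≤ CLS * ∫ X, ‖fderiv ℝ (fun Y => Real.sqrt (f t Y / q t Y)) X‖ ^ 2
            ∂(modGibbs d N β g (densMeasure d (μ t)))) :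
    -- conclusion: the Grönwall estimate on `𝓔_N^t = E_N(f_N^t, μ^t) + b(t)`:
    ∀ t, 0 ≤ t →
      modFreeEnergy d N β g (densMeasureN d N (f t)) (densMeasure d (μ t)) + b t
        ≤ Real.exp (-(4 * t) / (β * CLS) + ∫ τ in (0:ℝ)..t, Cc * a τ / 2) *
            (modFreeEnergy d N β g (densMeasureN d N (f 0)) (densMeasure d (μ 0)) + b 0)
          + Real.exp (-(4 * t) / (β * CLS) + ∫ τ in (0:ℝ)..t, Cc * a τ / 2) *
            ∫ τ in (0:ℝ)..t,
              Real.exp ((4 * τ) / (β * CLS) - ∫ τ' in (0:ℝ)..τ, Cc * a τ' / 2) *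
                (b' τ + (4 / (β * CLS)) *
                  (b τ - Real.log (Kpart d N β g (densMeasure d (μ τ))) / (β * N))) := by
  have hN0 : (0:ℝ) < (N:ℝ) := by exact_mod_cast Nat.lt_of_lt_of_le Nat.zero_lt_one hN
  have hNne : (N:ℝ) ≠ 0 := hN0.ne'
  -- Step 1: consequence of the LSI and the entropy identity
  have key2 : ∀ t, 0 ≤ t →
      β * (N:ℝ) * (modFreeEnergy d N β g (densMeasureN d N (f t)) (densMeasure d (μ t))
          + Real.log (Kpart d N β g (densMeasure d (μ t))) / (β * (N:ℝ)))
        ≤ CLS / 4 * ∫ X, ‖fderiv ℝ (fun Y => Real.log (f t Y / q t Y)) X‖ ^ 2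
            ∂(densMeasureN d N (f t)) := by
    intro t ht
    haveI hνP : IsProbabilityMeasure (densMeasure d (μ t)) := hμ_prob t ht
    haveI hFP : IsProbabilityMeasure (densMeasureN d N (f t)) := hf_prob t ht
    haveI hπP : ∀ i : Fin N, IsProbabilityMeasure
        ((fun _ : Fin N => densMeasure d (μ t)) i) := fun _ => hνP
    have hK := hK_pos t ht
    have hfc : Continuous (f t) := (hf_C1 t ht).continuous
    have hqc : Continuous (q t) := (hq_C1 t ht).continuous
    have hfm : Measurable (f t) := hfc.measurable
    have hqm : Measurable (q t) := hqc.measurable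
    have hf0 : ∀ X, 0 ≤ f t X := fun X => (hf_pos t ht X).le
    have hq0 : ∀ X, 0 ≤ q t X := fun X => (hq_pos t ht X).le
    have hqne : ∀ X, q t X ≠ 0 := fun X => (hq_pos t ht X).ne'
    have hupos : ∀ X, 0 < f t X / q t X := fun X => div_pos (hf_pos t ht X) (hq_pos t ht X)
    have hii := h_ii t ht
    rw [hQ_eq t ht] at hii
    -- total mass 1
    have hint1 : (∫ X, f t X) = 1 := by
      have h := integral_densMeasureN hfm hf0 (fun _ => (1:ℝ))
      simp only [mul_one] at h
      rw [← h]
      simp [measure_univ]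
    have hmass : (∫ Y, Real.sqrt (f t Y / q t Y) ^ 2 ∂(densMeasureN d N (q t))) = 1 := by
      rw [integral_densMeasureN hqm hq0]
      rw [show (fun X => q t X * Real.sqrt (f t X / q t X) ^ 2) = fun X => f t X from
        funext fun X => by rw [Real.sq_sqrt (hupos X).le, mul_comm, div_mul_cancel₀ _ (hqne X)]]
      exact hint1
    have hLHS : (∫ X, Real.sqrt (f t X / q t X) ^ 2 *
        Real.log (Real.sqrt (f t X / q t X) ^ 2 / 1) ∂(densMeasureN d N (q t)))
        = ∫ X, Real.log (f t X / q t X) ∂(densMeasureN d N (f t)) := by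
      rw [integral_densMeasureN hqm hq0, integral_densMeasureN hfm hf0]
      refine integral_congr_ae (Filter.Eventually.of_forall fun X => ?_)
      beta_reduce
      rw [Real.sq_sqrt (hupos X).le, div_one, ← mul_assoc, mul_comm (q t X),
        div_mul_cancel₀ _ (hqne X)]
    have hRHS : (∫ X, ‖fderiv ℝ (fun Y => Real.sqrt (f t Y / q t Y)) X‖ ^ 2
          ∂(densMeasureN d N (q t)))
        = 1/4 * ∫ X, ‖fderiv ℝ (fun Y => Real.log (f t Y / q t Y)) X‖ ^ 2
            ∂(densMeasureN d N (f t)) := by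
      rw [integral_densMeasureN hqm hq0, integral_densMeasureN hfm hf0, ← integral_const_mul]
      refine integral_congr_ae (Filter.Eventually.of_forall fun X => ?_)
      beta_reduce
      have hux := hupos X
      have hfd : DifferentiableAt ℝ (f t) X := ((hf_C1 t ht).differentiable one_ne_zero).differentiableAt
      have hqd : DifferentiableAt ℝ (q t) X := ((hq_C1 t ht).differentiable one_ne_zero).differentiableAt
      have hdu : DifferentiableAt ℝ (fun Y => f t Y / q t Y) X := by
        simp only [div_eq_mul_inv]
        exact hfd.mul (hqd.inv (hqne X))
      have h1 : HasFDerivAt (fun Y => Real.sqrt (f t Y / q t Y))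
          ((1 / (2 * Real.sqrt (f t X / q t X))) • fderiv ℝ (fun Y => f t Y / q t Y) X) X :=
        (Real.hasDerivAt_sqrt hux.ne').comp_hasFDerivAt X hdu.hasFDerivAt
      have h2 : HasFDerivAt (fun Y => Real.log (f t Y / q t Y))
          ((f t X / q t X)⁻¹ • fderiv ℝ (fun Y => f t Y / q t Y) X) X :=
        by
          have h2' := (Real.hasDerivAt_log hux.ne').comp_hasFDerivAt X hdu.hasFDerivAt
          exact h2'
      rw [h1.fderiv, h2.fderiv, norm_smul, norm_smul, mul_pow, mul_pow, Real.norm_eq_abs,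
        Real.norm_eq_abs,
        abs_of_pos (one_div_pos.mpr (mul_pos two_pos (Real.sqrt_pos.mpr hux))),
        abs_of_pos (inv_pos.mpr hux), div_pow, mul_pow, Real.sq_sqrt hux.le]
      have hfne := (hf_pos t ht X).ne'
      field_simp
      ring
    -- the entropy identity
    have hmE : Measurable (modEnergy d N g (densMeasure d (μ t))) := measurable_modEnergy hg_meas _
    have hw_meas : Measurable (fun X => ENNReal.ofReal
        (Real.exp (-(β * (N:ℝ) * modEnergy d N g (densMeasure d (μ t)) X))
          / Kpart d N β g (densMeasure d (μ t)))) :=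
      ENNReal.measurable_ofReal.comp
        ((Real.measurable_exp.comp ((hmE.const_mul (β * (N:ℝ))).neg)).div_const _)
    have hou_meas : Measurable (fun X => ENNReal.ofReal (f t X / q t X)) :=
      ENNReal.measurable_ofReal.comp (hfm.div hqm)
    have hq_meas' : Measurable (fun X => ENNReal.ofReal (q t X)) :=
      ENNReal.measurable_ofReal.comp hqm
    have hFQ : densMeasureN d N (f t)
        = (densMeasureN d N (q t)).withDensity (fun X => ENNReal.ofReal (f t X / q t X)) := by
      rw [densMeasureN, densMeasureN, ← withDensity_mul _ hq_meas' hou_meas]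
      congr 1
      funext X
      simp only [Pi.mul_apply]
      rw [← ENNReal.ofReal_mul (hq0 X), mul_comm (q t X), div_mul_cancel₀ _ (hqne X)]
    have hQw : modGibbs d N β g (densMeasure d (μ t))
        = (Measure.pi fun _ : Fin N => densMeasure d (μ t)).withDensity
          (fun X => ENNReal.ofReal
            (Real.exp (-(β * (N:ℝ) * modEnergy d N g (densMeasure d (μ t)) X))
              / Kpart d N β g (densMeasure d (μ t)))) := rfl
    have hFπ : densMeasureN d N (f t)
        = (Measure.pi fun _ : Fin N => densMeasure d (μ t)).withDensity
          ((fun X => ENNReal.ofReal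
            (Real.exp (-(β * (N:ℝ) * modEnergy d N g (densMeasure d (μ t)) X))
              / Kpart d N β g (densMeasure d (μ t))))
            * (fun X => ENNReal.ofReal (f t X / q t X))) := by
      rw [withDensity_mul _ hw_meas hou_meas, ← hQw, hQ_eq t ht, ← hFQ]
    have hrnπ : (densMeasureN d N (f t)).rnDeriv (Measure.pi fun _ : Fin N => densMeasure d (μ t))
        =ᵐ[Measure.pi fun _ : Fin N => densMeasure d (μ t)]
          ((fun X => ENNReal.ofReal
            (Real.exp (-(β * (N:ℝ) * modEnergy d N g (densMeasure d (μ t)) X))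
              / Kpart d N β g (densMeasure d (μ t))))
            * (fun X => ENNReal.ofReal (f t X / q t X))) := by
      rw [hFπ]
      exact Measure.rnDeriv_withDensity _ (hw_meas.mul hou_meas)
    have hac : densMeasureN d N (f t) ≪ (Measure.pi fun _ : Fin N => densMeasure d (μ t)) := by
      rw [hFπ]
      exact withDensity_absolutelyContinuous _ _
    have hrnF := hac.ae_eq hrnπ
    have hae : (fun X => Real.log (((densMeasureN d N (f t)).rnDeriv
          (Measure.pi fun _ : Fin N => densMeasure d (μ t)) X).toReal))
        =ᵐ[densMeasureN d N (f t)]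
        (fun X => Real.log (f t X / q t X)
          - β * (N:ℝ) * modEnergy d N g (densMeasure d (μ t)) X
          - Real.log (Kpart d N β g (densMeasure d (μ t)))) := by
      filter_upwards [hrnF] with X hX
      rw [hX]
      simp only [Pi.mul_apply]
      rw [← ENNReal.ofReal_mul (le_of_lt (div_pos (Real.exp_pos _) hK)),
        ENNReal.toReal_ofReal
          (mul_nonneg (le_of_lt (div_pos (Real.exp_pos _) hK)) (hupos X).le),
        Real.log_mul (div_pos (Real.exp_pos _) hK).ne' (hupos X).ne',
        Real.log_div (Real.exp_ne_zero _) hK.ne', Real.log_exp]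
      ring
    have hφint := hH_fin t ht
    have hmEint := hF_fin t ht
    have hint_sum : Integrable (fun X => Real.log (((densMeasureN d N (f t)).rnDeriv
          (Measure.pi fun _ : Fin N => densMeasure d (μ t)) X).toReal)
        + (β * (N:ℝ) * modEnergy d N g (densMeasure d (μ t)) X
          + Real.log (Kpart d N β g (densMeasure d (μ t)))))
        (densMeasureN d N (f t)) :=
      hφint.add ((hmEint.const_mul _).add (integrable_const _))
    have hIeq : (∫ X, Real.log (f t X / q t X) ∂(densMeasureN d N (f t)))
        = (∫ X, Real.log (((densMeasureN d N (f t)).rnDeriv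
            (Measure.pi fun _ : Fin N => densMeasure d (μ t)) X).toReal)
            ∂(densMeasureN d N (f t)))
          + (β * (N:ℝ) * (∫ X, modEnergy d N g (densMeasure d (μ t)) X
              ∂(densMeasureN d N (f t)))
            + Real.log (Kpart d N β g (densMeasure d (μ t)))) := by
      have e1 : (∫ X, Real.log (f t X / q t X) ∂(densMeasureN d N (f t)))
          = ∫ X, (Real.log (((densMeasureN d N (f t)).rnDeriv
              (Measure.pi fun _ : Fin N => densMeasure d (μ t)) X).toReal)
            + (β * (N:ℝ) * modEnergy d N g (densMeasure d (μ t)) X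
              + Real.log (Kpart d N β g (densMeasure d (μ t)))))
            ∂(densMeasureN d N (f t)) := by
        refine integral_congr_ae ?_
        filter_upwards [hae] with X hX
        linarith [hX]
      rw [e1, integral_add hφint (show Integrable (fun X =>
          β * (N:ℝ) * modEnergy d N g (densMeasure d (μ t)) X
            + Real.log (Kpart d N β g (densMeasure d (μ t)))) (densMeasureN d N (f t)) from
          (hmEint.const_mul _).add (integrable_const _)),
        integral_add (hmEint.const_mul _) (integrable_const _),
        integral_const_mul, integral_const]
      simp [measure_univ]
    have hlogid : (∫ X, Real.log (f t X / q t X) ∂(densMeasureN d N (f t)))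
        = β * (N:ℝ) * (modFreeEnergy d N β g (densMeasureN d N (f t)) (densMeasure d (μ t))
            + Real.log (Kpart d N β g (densMeasure d (μ t))) / (β * (N:ℝ))) := by
      rw [hIeq]
      simp only [modFreeEnergy, relEnt]
      field_simp
      ring
    rw [hmass, hLHS, hRHS] at hii
    rw [← hlogid]
    linarith [hii]
  -- Step 2: differential inequality for the corrected free energy
  have key : ∀ t, 0 ≤ t → E' t + b' t
      ≤ (-(4/(β*CLS)) + Cc * a t / 2) *
          (modFreeEnergy d N β g (densMeasureN d N (f t)) (densMeasure d (μ t)) + b t)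
        + (b' t + 4/(β*CLS) *
            (b t - Real.log (Kpart d N β g (densMeasure d (μ t))) / (β * (N:ℝ)))) := by
    intro t ht
    have h1 := h_i t ht
    have h2 := key2 t ht
    set I := ∫ X, ‖fderiv ℝ (fun Y => Real.log (f t Y / q t Y)) X‖ ^ 2
      ∂(densMeasureN d N (f t)) with hI
    set E := modFreeEnergy d N β g (densMeasureN d N (f t)) (densMeasure d (μ t)) with hE
    set k := Real.log (Kpart d N β g (densMeasure d (μ t))) / (β * (N:ℝ)) with hk
    have h3 : -(1/(β^2*(N:ℝ))) * I ≤ -(4/(β*CLS)) * (E + k) := by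
      have hden : (0:ℝ) < 4/(β^2*(N:ℝ)*CLS) := by positivity
      have hmul := mul_le_mul_of_nonneg_left h2 hden.le
      have e1 : 4/(β^2*(N:ℝ)*CLS) * (β*(N:ℝ)*(E+k)) = 4/(β*CLS)*(E+k) := by
        field_simp
      have e2 : 4/(β^2*(N:ℝ)*CLS) * (CLS/4*I) = 1/(β^2*(N:ℝ))*I := by
        field_simp
      rw [e1, e2] at hmul
      linarith
    nlinarith [h1, h3]
  -- Step 3: Grönwall
  have hbcont : ContinuousOn b (Set.Ici 0) := fun s hs =>
    (hb_deriv s hs).continuousAt.continuousWithinAt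
  have main := gronwall_aux (4/(β*CLS)) (fun τ => Cc * a τ / 2)
      (fun τ => b' τ + 4/(β*CLS) *
        (b τ - Real.log (Kpart d N β g (densMeasure d (μ τ))) / (β * (N:ℝ))))
      (fun τ => modFreeEnergy d N β g (densMeasureN d N (f τ)) (densMeasure d (μ τ)) + b τ)
      (fun τ => E' τ + b' τ)
      ((continuousOn_const.mul ha_cont).div_const 2)
      (hb'_cont.add (continuousOn_const.mul (hbcont.sub hk_cont)))
      (fun t ht => (hE_deriv t ht).add (hb_deriv t ht))
      key
  intro T hT
  have mainT := main T hT
  have hL4 : ∀ s : ℝ, 4 * s / (β * CLS) = 4/(β*CLS) * s := fun s => by ring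
  have hL4' : ∀ s : ℝ, -(4 * s) / (β * CLS) = -(4/(β*CLS) * s) := fun s => by ring
  simp only [hL4', hL4]
  linarith [mainT]
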